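/- In Moore's nim(n, ≤k), a position x = (x_1, ..., x_n) is a P-position if and only if for every bit index j, the sum over i of the j-th binary digit of x_i is congruent to 0 modulo k+1. -/

import Mathlib

/-- The `j`-th binary digit of `m`. -/
def digit (m j : ℕ) : ℕ := m / 2 ^ j % 2

/-- The `j`-th column sum of the Bouton matrix of a position. -/
def colSum {n : ℕ} (x : Fin n → ℕ) (j : ℕ) : ℕ := ∑ i, digit (x i) j

/-- A move of classical nim: strictly reduce exactly one pile. -/
def NimMove {n : ℕ} (x y : Fin n → ℕ) : Prop :=
  ∃ i, y i < x i ∧ ∀ j, j ≠ i → y j = x j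

/-- A move of Moore's nim(n, ≤k): strictly reduce at least one and at most `k` piles. -/
def MooreMove (k : ℕ) {n : ℕ} (x y : Fin n → ℕ) : Prop :=
  ∃ S : Finset (Fin n), S.Nonempty ∧ S.card ≤ k ∧ (∀ i ∈ S, y i < x i) ∧ ∀ i ∉ S, y i = x i

/-- A move of exact (n, k) nim: strictly reduce exactly `k` piles. -/
def ExactMove (k : ℕ) {n : ℕ} (x y : Fin n → ℕ) : Prop :=
  ∃ S : Finset (Fin n), S.card = k ∧ (∀ i ∈ S, y i < x i) ∧ ∀ i ∉ S, y i = x i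

/-- N-positions of an impartial game: there is a move to a position all of whose
moves lead to N-positions (i.e. a move to a P-position). -/
inductive NPos {α : Type*} (Move : α → α → Prop) : α → Prop where
  | intro {x y : α} (h : Move x y) (hy : ∀ z, Move y z → NPos Move z) : NPos Move x

/-- P-positions of an impartial game: every move leads to an N-position
(in particular, terminal positions are P-positions). -/
def PPos {α : Type*} (Move : α → α → Prop) (x : α) : Prop :=
  ∀ y, Move x y → NPos Move y

lemma digit_lt_two (m j : ℕ) : digit m j < 2 := Nat.mod_lt _ (by norm_num)

lemma digit_toNat (m j : ℕ) : digit m j = (m.testBit j).toNat := by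
  rcases Nat.mod_two_eq_zero_or_one (m / 2 ^ j) with h | h <;>
    simp [digit, Nat.testBit_eq_decide_div_mod_eq, h]

-- div/2^b facts
lemma div_succ_of_div (a c b : ℕ) (h : a / 2 ^ b = c / 2 ^ b) :
    a / 2 ^ (b+1) = c / 2 ^ (b+1) := by
  rw [pow_succ, ← Nat.div_div_eq_div_mul, ← Nat.div_div_eq_div_mul, h]

lemma digit_of_div (a c b : ℕ) (h : a / 2 ^ b = c / 2 ^ b) (j : ℕ) (hj : b ≤ j) :
    digit a j = digit c j := by
  obtain ⟨d, rfl⟩ := Nat.exists_eq_add_of_le hj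
  unfold digit
  rw [pow_add, ← Nat.div_div_eq_div_mul, ← Nat.div_div_eq_div_mul, h]

lemma lt_of_div_lt (a c b : ℕ) (h : a / 2 ^ b < c / 2 ^ b) : a < c := by
  by_contra hc
  exact absurd (Nat.div_le_div_right (le_of_not_gt hc)) (not_le.2 h)

lemma clear_div (m b : ℕ) : (m / 2 ^ b * 2 ^ b) / 2 ^ b = m / 2 ^ b :=
  Nat.mul_div_cancel _ (by positivity)

lemma clear_digit_high (m b j : ℕ) (h : b ≤ j) : digit (m / 2 ^ b * 2 ^ b) j = digit m j :=
  digit_of_div _ _ _ (clear_div m b) j h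

lemma clear_digit_low (m b j : ℕ) (h : j < b) : digit (m / 2 ^ b * 2 ^ b) j = 0 := by
  unfold digit
  obtain ⟨d, rfl⟩ : ∃ d, b = j + (d + 1) := ⟨b - j - 1, by omega⟩
  have e : m / 2 ^ (j + (d + 1)) * 2 ^ (j + (d + 1)) =
      (m / 2 ^ (j + (d + 1)) * 2 ^ d * 2) * 2 ^ j := by rw [pow_add]; ring
  rw [e, Nat.mul_div_cancel _ (by positivity), Nat.mul_mod_left]

lemma clearS_div (m b : ℕ) : (m / 2 ^ (b+1) * 2 ^ (b+1) + 2 ^ b) / 2 ^ (b+1) = m / 2 ^ (b+1) := by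
  rw [Nat.add_comm, Nat.add_mul_div_right _ _ (by positivity),
    Nat.div_eq_of_lt (Nat.pow_lt_pow_right (by norm_num) (Nat.lt_succ_self b)), Nat.zero_add]

lemma clearS_digit_high (m b j : ℕ) (h : b + 1 ≤ j) :
    digit (m / 2 ^ (b+1) * 2 ^ (b+1) + 2 ^ b) j = digit m j :=
  digit_of_div _ _ _ (clearS_div m b) j h

lemma clearS_digit_b (m b : ℕ) : digit (m / 2 ^ (b+1) * 2 ^ (b+1) + 2 ^ b) b = 1 := by
  unfold digit
  have e : m / 2 ^ (b+1) * 2 ^ (b+1) + 2 ^ b = (m / 2 ^ (b+1) * 2 + 1) * 2 ^ b := by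
    rw [pow_succ]; ring
  rw [e, Nat.mul_div_cancel _ (by positivity)]
  omega

lemma clearS_digit_low (m b j : ℕ) (h : j < b) :
    digit (m / 2 ^ (b+1) * 2 ^ (b+1) + 2 ^ b) j = 0 := by
  unfold digit
  obtain ⟨e, rfl⟩ : ∃ e, b = j + (e + 1) := ⟨b - j - 1, by omega⟩
  set q := m / 2 ^ (j + (e+1) + 1) with hq
  have he : q * 2 ^ (j + (e+1) + 1) + 2 ^ (j + (e+1)) =
      ((q * 2 ^ (e+1) + 2 ^ e) * 2) * 2 ^ j := by
    rw [pow_add, pow_add, pow_add]; ring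
  rw [he, Nat.mul_div_cancel _ (by positivity), Nat.mul_mod_left]

lemma div_pow_succ_decomp (m b : ℕ) : m / 2 ^ b = 2 * (m / 2 ^ (b+1)) + digit m b := by
  have h1 := Nat.div_add_mod (m / 2 ^ b) 2
  have h2 : m / 2 ^ b / 2 = m / 2 ^ (b+1) := by
    rw [pow_succ, Nat.div_div_eq_div_mul]
  unfold digit
  omega

lemma clear_div_lt (m b : ℕ) (h : digit m b = 1) :
    (m / 2 ^ (b+1) * 2 ^ (b+1)) / 2 ^ b < m / 2 ^ b := by
  have e : m / 2 ^ (b+1) * 2 ^ (b+1) = (m / 2 ^ (b+1) * 2) * 2 ^ b := by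
    rw [pow_succ]; ring
  rw [e, Nat.mul_div_cancel _ (by positivity), div_pow_succ_decomp m b, h]
  omega

lemma digit_xor_zero (a b j : ℕ) : digit (a ^^^ b) j = 0 ↔ digit a j = digit b j := by
  rw [digit_toNat, digit_toNat, digit_toNat, Nat.testBit_xor]
  cases ha : a.testBit j <;> cases hb : b.testBit j <;> simp

lemma testBit_of_digit_one {m j : ℕ} (h : digit m j = 1) : m.testBit j = true := by
  rw [digit_toNat] at h; cases hm : m.testBit j <;> simp [hm] at h ⊢

lemma testBit_of_digit_zero {m j : ℕ} (h : digit m j = 0) : m.testBit j = false := by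
  rw [digit_toNat] at h; cases hm : m.testBit j <;> simp [hm] at h ⊢

lemma testBit_eq_of_digit_eq {a b j : ℕ} (h : digit a j = digit b j) :
    a.testBit j = b.testBit j := by
  rw [digit_toNat, digit_toNat] at h
  cases ha : a.testBit j <;> cases hb : b.testBit j <;> simp [ha, hb] at h ⊢

lemma top_bit {a b : ℕ} (h : a < b) :
    digit b (Nat.log2 (a ^^^ b)) = 1 ∧ digit a (Nat.log2 (a ^^^ b)) = 0 ∧
    ∀ j, Nat.log2 (a ^^^ b) < j → digit a j = digit b j := by
  set m := a ^^^ b with hm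
  have hm0 : m ≠ 0 := by
    intro h0
    exact absurd (xor_eq_zero_iff.1 h0) (Nat.ne_of_lt h)
  set t := Nat.log2 m with ht
  have h1 : 2 ^ t ≤ m := Nat.log2_self_le hm0
  have h2 : m < 2 ^ (t + 1) := Nat.lt_log2_self
  have hdt : digit m t = 1 := by
    have l1 : 1 ≤ m / 2 ^ t := (Nat.one_le_div_iff (by positivity)).2 h1
    have l2 : m / 2 ^ t < 2 := by
      rw [Nat.div_lt_iff_lt_mul (by positivity : (0:ℕ) < 2 ^ t)]
      calc m < 2 ^ (t+1) := h2
      _ = 2 * 2 ^ t := by rw [pow_succ]; ring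
    unfold digit
    omega
  have hhigh : ∀ j, t < j → digit a j = digit b j := by
    intro j hj
    apply (digit_xor_zero a b j).1
    have : m < 2 ^ j := lt_of_lt_of_le h2 (Nat.pow_le_pow_right (by norm_num) hj)
    unfold digit
    rw [← hm, Nat.div_eq_of_lt this]
  have hne : digit a t ≠ digit b t := by
    intro he
    rw [← digit_xor_zero a b t, ← hm] at he
    omega
  have ha2 := digit_lt_two a t
  have hb2 := digit_lt_two b t
  have hnot : ¬ (digit a t = 1 ∧ digit b t = 0) := by
    rintro ⟨h1', h0'⟩
    have : b < a := Nat.lt_of_testBit t (testBit_of_digit_zero h0')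
      (testBit_of_digit_one h1') (fun j hj => (testBit_eq_of_digit_eq (hhigh j hj)).symm)
    omega
  refine ⟨by omega, by omega, hhigh⟩

lemma moveA {n k : ℕ} {x y : Fin n → ℕ} (hx : ∀ j, colSum x j % (k+1) = 0)
    (hy : ∀ j, colSum y j % (k+1) = 0) (h : MooreMove k x y) : False := by
  obtain ⟨S, hne, hcard, hlt, heq⟩ := h
  set g : Fin n → ℕ := fun i => Nat.log2 (y i ^^^ x i) with hg
  obtain ⟨i₀, hi₀, hmax⟩ := S.exists_max_image g hne
  set j := g i₀ with hj
  have key : ∀ i, digit (x i) j = digit (y i) j + (if i ∈ S ∧ g i = j then 1 else 0) := by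
    intro i
    by_cases hiS : i ∈ S
    · obtain ⟨d1, d0, dh⟩ := top_bit (hlt i hiS)
      by_cases hgi : g i = j
      · rw [if_pos ⟨hiS, hgi⟩, ← hgi]
        simp only [hg]
        omega
      · rw [if_neg (by tauto)]
        have hgij : g i < j := lt_of_le_of_ne (hmax i hiS) hgi
        rw [dh j hgij]
        omega
    · rw [heq i hiS, if_neg (by tauto)]
      omega
  have hsum : colSum x j = colSum y j + ∑ i, (if i ∈ S ∧ g i = j then 1 else 0) := by
    unfold colSum
    rw [← Finset.sum_add_distrib]
    exact Finset.sum_congr rfl fun i _ => key i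
  set t := ∑ i, (if i ∈ S ∧ g i = j then (1:ℕ) else 0) with htdef
  have ht1 : 1 ≤ t := by
    have := Finset.single_le_sum (f := fun i => if i ∈ S ∧ g i = j then (1:ℕ) else 0)
      (fun i _ => by positivity) (Finset.mem_univ i₀)
    have hle : (if i₀ ∈ S ∧ g i₀ = j then (1:ℕ) else 0) ≤ t := this
    have h0 : (if i₀ ∈ S ∧ g i₀ = j then (1:ℕ) else 0) = 1 := if_pos ⟨hi₀, hj.symm⟩
    omega
  have htk : t ≤ k := by
    have h1 : t ≤ ∑ i, (if i ∈ S then (1:ℕ) else 0) :=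
      Finset.sum_le_sum fun i _ => by split_ifs <;> simp_all
    have h2 : ∑ i, (if i ∈ S then (1:ℕ) else 0) = S.card := by
      simp [Finset.sum_ite_mem]
    omega
  have hxj := hx j
  rw [hsum, Nat.add_mod, hy j, Nat.zero_add, Nat.mod_mod] at hxj
  rw [Nat.mod_eq_of_lt (by omega)] at hxj
  omega

lemma sum_ind (s : Finset (Fin m)) : (∑ i, if i ∈ s then (1:ℕ) else 0) = s.card := by
  simp [Finset.sum_ite_mem]

lemma auxB {n : ℕ} (k : ℕ) (b : ℕ) : ∀ (x : Fin n → ℕ) (T : Finset (Fin n)),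
    T.card ≤ k → (∀ j, b ≤ j → colSum x j % (k+1) = 0) →
    ∃ (y : Fin n → ℕ) (T' : Finset (Fin n)), T ⊆ T' ∧ T'.card ≤ k ∧
      (∀ i, i ∉ T' → y i = x i) ∧
      (∀ i ∈ T', y i / 2 ^ b = x i / 2 ^ b) ∧
      (∀ i ∈ T', i ∉ T → y i < x i) ∧
      (∀ j, colSum y j % (k+1) = 0) := by
  induction b with
  | zero =>
    intro x T hTk hgood
    exact ⟨x, T, subset_rfl, hTk, fun _ _ => rfl, fun _ _ => rfl,
      fun i hi hni => absurd hi hni, fun j => hgood j (Nat.zero_le j)⟩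
  | succ b ih =>
    intro x T hTk hgood
    set U := Finset.univ.filter (fun i => i ∉ T ∧ digit (x i) b = 1) with hU
    set c := U.card with hc
    set r := c % (k+1) with hr
    have hrk : r < k + 1 := Nat.mod_lt _ (Nat.succ_pos k)
    have hmemU : ∀ i, i ∈ U ↔ (i ∉ T ∧ digit (x i) b = 1) := by
      intro i; simp [hU]
    by_cases hcase : (k + 1 - r) % (k + 1) ≤ T.card
    · -- use free digits of T
      set d := (k + 1 - r) % (k + 1) with hd
      obtain ⟨D, hDT, hDcard⟩ := Finset.exists_subset_card_eq hcase
      set x' : Fin n → ℕ := fun i =>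
        if i ∈ D then x i / 2 ^ (b+1) * 2 ^ (b+1) + 2 ^ b
        else if i ∈ T then x i / 2 ^ (b+1) * 2 ^ (b+1) else x i with hx'
      have hdig_high : ∀ i, ∀ j, b + 1 ≤ j → digit (x' i) j = digit (x i) j := by
        intro i j hj
        simp only [hx']
        split_ifs with h1 h2
        · exact clearS_digit_high _ _ _ hj
        · exact clear_digit_high _ _ _ hj
        · rfl
      have hdig_b : ∀ i, digit (x' i) b =
          (if i ∈ U then 1 else 0) + (if i ∈ D then 1 else 0) := by
        intro i
        simp only [hx']
        by_cases h1 : i ∈ D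
        · have hiT : i ∈ T := hDT h1
          have hiU : i ∉ U := fun hu => ((hmemU i).1 hu).1 hiT
          rw [if_pos h1, if_neg hiU, if_pos h1, clearS_digit_b]
        · rw [if_neg h1, if_neg h1]
          by_cases h2 : i ∈ T
          · have hiU : i ∉ U := fun hu => ((hmemU i).1 hu).1 h2
            rw [if_pos h2, if_neg hiU, clear_digit_low _ _ _ (Nat.lt_succ_self b)]
          · rw [if_neg h2]
            have h2' := digit_lt_two (x i) b
            by_cases h3 : digit (x i) b = 1
            · rw [if_pos ((hmemU i).2 ⟨h2, h3⟩)]; omega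
            · rw [if_neg (fun hu => h3 ((hmemU i).1 hu).2)]; omega
      have hdiv' : ∀ i, x' i / 2 ^ (b+1) = x i / 2 ^ (b+1) := by
        intro i
        simp only [hx']
        split_ifs with h1 h2
        · exact clearS_div _ _
        · exact clear_div _ _
        · rfl
      have hgood' : ∀ j, b ≤ j → colSum x' j % (k+1) = 0 := by
        intro j hj
        rcases Nat.lt_or_ge j (b+1) with hj1 | hj1
        · have hjb : j = b := by omega
          subst hjb
          have hsum : colSum x' j = c + d := by
            unfold colSum
            rw [Finset.sum_congr rfl fun i _ => hdig_b i, Finset.sum_add_distrib,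
              sum_ind, sum_ind, hc, hDcard]
          rw [hsum, Nat.add_mod, ← hr]
          have hdlt : d % (k+1) = d := Nat.mod_eq_of_lt (Nat.mod_lt _ (Nat.succ_pos k))
          rw [hdlt]
          rcases Nat.eq_zero_or_pos r with h0 | h0
          · have : d = 0 := by rw [hd, h0, Nat.sub_zero, Nat.mod_self]
            rw [this, h0, Nat.add_zero, Nat.zero_mod]
          · have : d = k + 1 - r := by rw [hd]; exact Nat.mod_eq_of_lt (by omega)
            have : r + d = k + 1 := by omega
            rw [this, Nat.mod_self]
        · have : colSum x' j = colSum x j :=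
            Finset.sum_congr rfl fun i _ => hdig_high i j hj1
          rw [this]
          exact hgood j (by omega)
      obtain ⟨y, T', hTT', hT'k, hout, hdiv, hlt', hall⟩ := ih x' T hTk hgood'
      refine ⟨y, T', hTT', hT'k, ?_, ?_, ?_, hall⟩
      · intro i hi
        rw [hout i hi]
        have hiT : i ∉ T := fun h => hi (hTT' h)
        simp only [hx']
        rw [if_neg (fun h => hiT (hDT h)), if_neg hiT]
      · intro i hi
        have := div_succ_of_div _ _ _ (hdiv i hi)
        rw [this, hdiv' i]
      · intro i hi hiT
        have h1 := hlt' i hi hiT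
        have : x' i = x i := by
          simp only [hx']
          rw [if_neg (fun h => hiT (hDT h)), if_neg hiT]
        omega
    · -- move r new piles into T
      have hrpos : 1 ≤ r := by
        by_contra h0
        have : r = 0 := by omega
        rw [this] at hcase
        simp [Nat.mod_self] at hcase
      have hdval : (k + 1 - r) % (k + 1) = k + 1 - r := Nat.mod_eq_of_lt (by omega)
      have hTr : T.card + r ≤ k := by rw [hdval] at hcase; omega
      have hrc : r ≤ c := Nat.mod_le _ _
      obtain ⟨R, hRU, hRcard⟩ := Finset.exists_subset_card_eq hrc
      set T'' := T ∪ R with hT''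
      have hT''k : T''.card ≤ k := by
        rw [hT'']
        have h1 := Finset.card_union_le T R
        rw [hRcard] at h1
        omega
      set x' : Fin n → ℕ := fun i =>
        if i ∈ T'' then x i / 2 ^ (b+1) * 2 ^ (b+1) else x i with hx'
      have hdig_high : ∀ i, ∀ j, b + 1 ≤ j → digit (x' i) j = digit (x i) j := by
        intro i j hj
        simp only [hx']
        split_ifs with h1
        · exact clear_digit_high _ _ _ hj
        · rfl
      have hdig_b : ∀ i, digit (x' i) b = if i ∈ U \ R then 1 else 0 := by
        intro i
        simp only [hx']
        by_cases h1 : i ∈ T''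
        · rw [if_pos h1, clear_digit_low _ _ _ (Nat.lt_succ_self b)]
          rcases Finset.mem_union.1 h1 with h2 | h2
          · rw [if_neg (fun h => ((hmemU i).1 (Finset.mem_sdiff.1 h).1).1 h2)]
          · rw [if_neg (fun h => (Finset.mem_sdiff.1 h).2 h2)]
        · rw [if_neg h1]
          have hiT : i ∉ T := fun h => h1 (Finset.mem_union_left _ h)
          have hiR : i ∉ R := fun h => h1 (Finset.mem_union_right _ h)
          have h2' := digit_lt_two (x i) b
          by_cases h3 : digit (x i) b = 1
          · rw [if_pos (Finset.mem_sdiff.2 ⟨(hmemU i).2 ⟨hiT, h3⟩, hiR⟩)]; omega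
          · rw [if_neg (fun h => h3 ((hmemU i).1 (Finset.mem_sdiff.1 h).1).2)]; omega
      have hdiv' : ∀ i, x' i / 2 ^ (b+1) = x i / 2 ^ (b+1) := by
        intro i
        simp only [hx']
        split_ifs with h1
        · exact clear_div _ _
        · rfl
      have hgood' : ∀ j, b ≤ j → colSum x' j % (k+1) = 0 := by
        intro j hj
        rcases Nat.lt_or_ge j (b+1) with hj1 | hj1
        · have hjb : j = b := by omega
          subst hjb
          have hsum : colSum x' j = c - r := by
            unfold colSum
            rw [Finset.sum_congr rfl fun i _ => hdig_b i, sum_ind,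
              Finset.card_sdiff_of_subset hRU, hRcard, ← hc]
          rw [hsum]
          have hdm := Nat.div_add_mod c (k+1)
          have : c - r = (k+1) * (c / (k+1)) := by omega
          rw [this, Nat.mul_mod_right]
        · have : colSum x' j = colSum x j :=
            Finset.sum_congr rfl fun i _ => hdig_high i j hj1
          rw [this]
          exact hgood j (by omega)
      obtain ⟨y, T', hTT', hT'k, hout, hdiv, hlt', hall⟩ := ih x' T'' hT''k hgood'
      refine ⟨y, T', (Finset.subset_union_left).trans hTT', hT'k, ?_, ?_, ?_, hall⟩
      · intro i hi
        rw [hout i hi]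
        simp only [hx']
        rw [if_neg (fun h => hi (hTT' h))]
      · intro i hi
        have := div_succ_of_div _ _ _ (hdiv i hi)
        rw [this, hdiv' i]
      · intro i hi hiT
        by_cases h1 : i ∈ T''
        · have hiR : i ∈ R := by
            rcases Finset.mem_union.1 h1 with h2 | h2
            · exact absurd h2 hiT
            · exact h2
          have hd1 : digit (x i) b = 1 := ((hmemU i).1 (hRU hiR)).2
          have h2 : y i / 2 ^ b = x' i / 2 ^ b := hdiv i hi
          have h3 : x' i / 2 ^ b < x i / 2 ^ b := by
            simp only [hx']
            rw [if_pos h1]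
            exact clear_div_lt _ _ hd1
          exact lt_of_div_lt _ _ b (by rw [h2]; exact h3)
        · have h2 := hlt' i hi h1
          have : x' i = x i := by
            simp only [hx']
            rw [if_neg h1]
          omega

lemma moveB {n k : ℕ} {x : Fin n → ℕ} (hx : ¬ ∀ j, colSum x j % (k+1) = 0) :
    ∃ y, MooreMove k x y ∧ ∀ j, colSum y j % (k+1) = 0 := by
  set b := Finset.univ.sup x with hb
  have hgood : ∀ j, b ≤ j → colSum x j % (k+1) = 0 := by
    intro j hj
    have hz : colSum x j = 0 := by
      unfold colSum digit
      apply Finset.sum_eq_zero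
      intro i _
      have h1 : x i < 2 ^ j :=
        lt_of_le_of_lt (Finset.le_sup (Finset.mem_univ i))
          (lt_of_lt_of_le Nat.lt_two_pow_self (Nat.pow_le_pow_right (by norm_num) hj))
      rw [Nat.div_eq_of_lt h1]
      rfl
    rw [hz]
    exact Nat.zero_mod _
  obtain ⟨y, T', _, hT'k, hout, _, hlt, hall⟩ := auxB k b x ∅ (Nat.zero_le k) hgood
  have hne : T'.Nonempty := by
    rcases T'.eq_empty_or_nonempty with h | h
    · exfalso
      apply hx
      intro j
      have : y = x := funext fun i => hout i (by simp [h])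
      rw [← this]
      exact hall j
    · exact h
  exact ⟨y, ⟨T', hne, hT'k, fun i hi => hlt i hi (Finset.notMem_empty i), hout⟩, hall⟩

lemma move_sum_lt {n k : ℕ} {x y : Fin n → ℕ} (h : MooreMove k x y) :
    ∑ i, y i < ∑ i, x i := by
  obtain ⟨S, ⟨i₀, hi₀⟩, _, hlt, heq⟩ := h
  refine Finset.sum_lt_sum (fun i _ => ?_) ⟨i₀, Finset.mem_univ i₀, hlt i₀ hi₀⟩
  by_cases hi : i ∈ S
  · exact (hlt i hi).le
  · exact (heq i hi).le

lemma mainInd {n k : ℕ} : ∀ m (x : Fin n → ℕ), (∑ i, x i) = m →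
    ((∀ j, colSum x j % (k+1) = 0) → ¬ NPos (MooreMove k) x) ∧
    ((¬ ∀ j, colSum x j % (k+1) = 0) → NPos (MooreMove k) x) := by
  intro m
  induction m using Nat.strong_induction_on with
  | _ m ih =>
    intro x hxm
    constructor
    · intro hgood hN
      cases hN with
      | intro hmv hy =>
        rename_i y
        have hybad : ¬ ∀ j, colSum y j % (k+1) = 0 := fun hyg => moveA hgood hyg hmv
        obtain ⟨z, hmz, hzg⟩ := moveB hybad
        have hNz := hy z hmz
        have hlt1 := move_sum_lt hmv
        have hlt2 := move_sum_lt hmz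
        exact (ih (∑ i, z i) (by omega) z rfl).1 hzg hNz
    · intro hbad
      obtain ⟨y, hmv, hyg⟩ := moveB hbad
      refine NPos.intro hmv (fun z hmz => ?_)
      have hzbad : ¬ ∀ j, colSum z j % (k+1) = 0 := fun hzg => moveA hyg hzg hmz
      have hlt1 := move_sum_lt hmv
      have hlt2 := move_sum_lt hmz
      exact (ih (∑ i, z i) (by omega) z rfl).2 hzbad


/-- Moore's criterion for P-positions of Moore's nim(n, ≤k). -/
theorem moore_PPos_iff {n k : ℕ} (x : Fin n → ℕ) :
    PPos (MooreMove k) x ↔ ∀ j, colSum x j % (k + 1) = 0 := by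
  constructor
  · intro hP
    by_contra hbad
    obtain ⟨y, hmv, hyg⟩ := moveB hbad
    exact (mainInd (∑ i, y i) y rfl).1 hyg (hP y hmv)
  · intro hgood y hmv
    exact (mainInd (∑ i, y i) y rfl).2 (fun hyg => moveA hgood hyg hmv)
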